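/- Let X be a real vector space with dim X = n ≥ 2 and R : X* → End(X) a linear map with tr R(λ) = 0 for all λ ∈ X*. Let f₁,…,fₙ be a basis of X* and set V_{ij} = V^R_{f_i,f_j}. Then: (1) for every p ∈ X, T^R_p = {V^R_{λ,μ}(p) : λ, μ ∈ X*} = span{V_{ij}(p) : 1 ≤ i < j ≤ n}; and (2) R is uniquely determined by the collection {V_{ij}}_{1 ≤ i < j ≤ n}, i.e. if R' : X* → End(X) is another linear map with trace-free values and V^{R'}_{f_i,f_j} = V^R_{f_i,f_j} for all 1 ≤ i < j ≤ n, then R' = R; in particular, if V_{ij} = 0 for all 1 ≤ i < j ≤ n, then R = 0. -/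

import Mathlib

/-- For a linear map `R : X* → End(X)` and `λ, μ ∈ X*`, the quadratic vector field
`V^R_{λ,μ}(x) = μ(x) • R_λ(x) - λ(x) • R_μ(x)`. -/
def VR {X : Type*} [AddCommGroup X] [Module ℝ X]
    (R : Module.Dual ℝ X →ₗ[ℝ] (X →ₗ[ℝ] X))
    (lam mu : Module.Dual ℝ X) (x : X) : X :=
  mu x • R lam x - lam x • R mu x

/-- For a linear map `R : X* → End(X)` and `p ∈ X`, the set
`T^R_p = {R_λ(p) : λ ∈ X*, λ(p) = 0}`. -/
def TR {X : Type*} [AddCommGroup X] [Module ℝ X]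
    (R : Module.Dual ℝ X →ₗ[ℝ] (X →ₗ[ℝ] X)) (p : X) : Set X :=
  {y | ∃ lam : Module.Dual ℝ X, lam p = 0 ∧ R lam p = y}


open Module LinearMap

lemma traceSmulRight {X : Type*} [AddCommGroup X] [Module ℝ X] [FiniteDimensional ℝ X]
    (l : Module.Dual ℝ X) (w : X) :
    LinearMap.trace ℝ X (l.smulRight w) = l w := by
  have h1 : l.smulRight w = (LinearMap.toSpanSingleton ℝ X w) ∘ₗ l := by
    ext x; simp [LinearMap.toSpanSingleton_apply]
  rw [h1, LinearMap.trace_comp_comm']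
  have h2 : l ∘ₗ (LinearMap.toSpanSingleton ℝ X w) = (l w) • LinearMap.id := by
    ext; simp [LinearMap.toSpanSingleton_apply, mul_comm]
  rw [h2, map_smul, LinearMap.trace_id]
  simp

lemma existsDualOne {X : Type*} [AddCommGroup X] [Module ℝ X] [FiniteDimensional ℝ X]
    (p : X) (hp : p ≠ 0) : ∃ mu : Module.Dual ℝ X, mu p = 1 := by
  have := (Module.forall_dual_apply_eq_zero_iff ℝ p).not.mpr hp
  push_neg at this
  obtain ⟨phi, hphi⟩ := this
  exact ⟨(phi p)⁻¹ • phi, by simp [inv_mul_cancel₀ hphi]⟩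

lemma part1a {X : Type*} [AddCommGroup X] [Module ℝ X] [FiniteDimensional ℝ X]
    (R : Module.Dual ℝ X →ₗ[ℝ] (X →ₗ[ℝ] X)) (p : X) :
    TR R p = {y | ∃ lam mu : Module.Dual ℝ X, VR R lam mu p = y} := by
  ext y
  constructor
  · rintro ⟨lam, hlam, rfl⟩
    rcases eq_or_ne p 0 with rfl | hp
    · exact ⟨lam, lam, by simp [VR]⟩
    · obtain ⟨mu, hmu⟩ := existsDualOne p hp
      exact ⟨lam, mu, by simp [VR, hmu, hlam]⟩
  · rintro ⟨lam, mu, rfl⟩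
    refine ⟨mu p • lam - lam p • mu, by simp [mul_comm], ?_⟩
    simp [VR]

lemma part1b {X : Type*} [AddCommGroup X] [Module ℝ X] [FiniteDimensional ℝ X]
    {n : ℕ} (hn : 2 ≤ n)
    (R : Module.Dual ℝ X →ₗ[ℝ] (X →ₗ[ℝ] X))
    (f : Basis (Fin n) ℝ (Module.Dual ℝ X)) (p : X) :
    TR R p = ↑(Submodule.span ℝ
        {y | ∃ i j : Fin n, i < j ∧ VR R (f i) (f j) p = y}) := by
  rcases eq_or_ne p 0 with rfl | hp
  · have h1 : TR R (0 : X) = {(0 : X)} := by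
      ext y
      constructor
      · rintro ⟨lam, _, rfl⟩; simp
      · rintro rfl; exact ⟨0, by simp⟩
    have hij : Fin.mk 0 (by omega : (0:ℕ) < n) < Fin.mk 1 (by omega) := by
      simp [Fin.lt_def]
    have h2 : {y | ∃ i j : Fin n, i < j ∧ VR R (f i) (f j) (0 : X) = y} = {(0 : X)} := by
      ext y
      constructor
      · rintro ⟨i, j, _, rfl⟩; simp [VR]
      · rintro rfl; exact ⟨Fin.mk 0 (by omega), Fin.mk 1 (by omega), hij, by simp [VR]⟩
    rw [h1, h2, Submodule.span_singleton_eq_bot.mpr rfl]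
    simp
  · -- p ≠ 0 : pick k with f k p ≠ 0
    have hk : ∃ k : Fin n, f k p ≠ 0 := by
      by_contra h
      push_neg at h
      apply hp
      rw [← Module.forall_dual_apply_eq_zero_iff ℝ p]
      intro phi
      have : phi = ∑ i, f.repr phi i • f i := (f.sum_repr phi).symm
      rw [this]
      simp [h, -Basis.sum_repr]
    obtain ⟨k, hk⟩ := hk
    set c := f k p with hc
    -- the evaluation functional
    set eps : Module.Dual ℝ X →ₗ[ℝ] ℝ := Module.Dual.eval ℝ X p with heps
    set Phi : Module.Dual ℝ X →ₗ[ℝ] X := (LinearMap.applyₗ p) ∘ₗ R with hPhi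
    set K : Set (Module.Dual ℝ X) :=
      {kap | ∃ i j : Fin n, i < j ∧ f j p • f i - f i p • f j = kap} with hK
    have hker : LinearMap.ker eps = Submodule.span ℝ K := by
      apply le_antisymm
      · -- ker ≤ span K
        intro lam hlam
        have hmem : ∀ m : Module.Dual ℝ X,
            m - (c⁻¹ * m p) • f k ∈ Submodule.span ℝ K := by
          set Theta : Module.Dual ℝ X →ₗ[ℝ] Module.Dual ℝ X :=
            LinearMap.id - c⁻¹ • (eps.smulRight (f k)) with hT
          have hTapp : ∀ m, Theta m = m - (c⁻¹ * m p) • f k := by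
            intro m; simp [hT, heps, mul_smul, Module.Dual.eval]
          have hbasis : ∀ i : Fin n, Theta (f i) ∈ Submodule.span ℝ K := by
            intro i
            rcases lt_trichotomy i k with h | h | h
            · have hmem : f k p • f i - f i p • f k ∈ K := ⟨i, k, h, rfl⟩
              have : Theta (f i) = c⁻¹ • (f k p • f i - f i p • f k) := by
                rw [hTapp, ← hc]
                match_scalars <;> field_simp <;> ring
              rw [this]
              exact Submodule.smul_mem _ _ (Submodule.subset_span hmem)
            · subst h
              have : Theta (f i) = 0 := by
                rw [hTapp, ← hc, mul_comm, mul_inv_cancel₀ hk, one_smul, sub_self]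
              rw [this]; exact Submodule.zero_mem _
            · have hmem : f i p • f k - f k p • f i ∈ K := ⟨k, i, h, rfl⟩
              have : Theta (f i) = (-c⁻¹) • (f i p • f k - f k p • f i) := by
                rw [hTapp, ← hc]
                match_scalars <;> field_simp <;> ring
              rw [this]
              exact Submodule.smul_mem _ _ (Submodule.subset_span hmem)
          have hall : ∀ m, Theta m ∈ Submodule.span ℝ K := by
            intro m
            have hspan : m ∈ Submodule.span ℝ (Set.range f) := by
              rw [f.span_eq]; trivial
            have hle : Submodule.span ℝ (Set.range f) ≤
                Submodule.comap Theta (Submodule.span ℝ K) := by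
              rw [Submodule.span_le]
              rintro _ ⟨i, rfl⟩
              exact hbasis i
            exact hle hspan
          intro m
          rw [← hTapp]; exact hall m
        have := hmem lam
        rw [LinearMap.mem_ker] at hlam
        have hlp : lam p = 0 := hlam
        rw [hlp, mul_zero, zero_smul, sub_zero] at this
        exact this
      · rw [Submodule.span_le]
        rintro _ ⟨i, j, hij, rfl⟩
        rw [SetLike.mem_coe, LinearMap.mem_ker]
        simp [heps, Module.Dual.eval, mul_comm]
    have himg : Phi '' K = {y | ∃ i j : Fin n, i < j ∧ VR R (f i) (f j) p = y} := by
      ext y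
      constructor
      · rintro ⟨kap, ⟨i, j, hij, rfl⟩, rfl⟩
        exact ⟨i, j, hij, by simp [hPhi, VR]⟩
      · rintro ⟨i, j, hij, rfl⟩
        exact ⟨f j p • f i - f i p • f j, ⟨i, j, hij, rfl⟩, by simp [hPhi, VR]⟩
    have hTRmap : TR R p = ↑(Submodule.map Phi (LinearMap.ker eps)) := by
      ext y
      constructor
      · rintro ⟨lam, hlam, rfl⟩
        exact ⟨lam, by simpa [heps, Module.Dual.eval] using hlam, by simp [hPhi]⟩
      · rintro ⟨lam, hlam, rfl⟩
        exact ⟨lam, by simpa [heps, Module.Dual.eval] using hlam, by simp [hPhi]⟩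
    rw [hTRmap, hker, Submodule.map_span, himg]

lemma core {X : Type*} [AddCommGroup X] [Module ℝ X] [FiniteDimensional ℝ X]
    {n : ℕ} (S : Module.Dual ℝ X →ₗ[ℝ] (X →ₗ[ℝ] X))
    (htr : ∀ lam : Module.Dual ℝ X, LinearMap.trace ℝ X (S lam) = 0)
    (f : Basis (Fin n) ℝ (Module.Dual ℝ X))
    (hV : ∀ i j : Fin n, i < j → ∀ x : X, VR S (f i) (f j) x = 0) :
    S = 0 := by
  -- Step A : bilinear identity
  have hV' : ∀ (lam mu : Module.Dual ℝ X) (x : X), mu x • S lam x = lam x • S mu x := by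
    intro lam mu x
    set B : Module.Dual ℝ X →ₗ[ℝ] Module.Dual ℝ X →ₗ[ℝ] X :=
      LinearMap.mk₂ ℝ (fun l m => m x • S l x - l x • S m x)
        (by intros; simp [add_smul, smul_add]; abel)
        (by intros; simp [smul_smul, smul_sub, mul_comm])
        (by intros; simp [add_smul, smul_add]; abel)
        (by intros; simp [smul_smul, smul_sub, mul_comm])
      with hB
    have hBf : ∀ i j : Fin n, B (f i) (f j) = 0 := by
      intro i j
      rcases lt_trichotomy i j with h | h | h
      · simpa [hB, VR] using hV i j h x
      · subst h; simp [hB]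
      · have := hV j i h x
        simp only [VR] at this
        simp only [hB, LinearMap.mk₂_apply]
        rw [sub_eq_zero] at this ⊢
        exact this.symm
    have hB0 : B = 0 := f.ext fun i => f.ext fun j => by rw [hBf i j]; simp
    have := LinearMap.ext_iff.1 (LinearMap.ext_iff.1 hB0 lam) mu
    simpa [hB, sub_eq_zero] using this
  -- Step B : lam x = 0 → S lam x = 0
  have h0 : ∀ (lam : Module.Dual ℝ X) (x : X), lam x = 0 → S lam x = 0 := by
    intro lam x hx
    rcases eq_or_ne x 0 with rfl | hx0
    · simp
    · obtain ⟨mu, hmu⟩ := existsDualOne x hx0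
      have := hV' lam mu x
      rw [hmu, hx, one_smul, zero_smul] at this
      exact this
  -- rank one structure
  have rk1 : ∀ (l : Module.Dual ℝ X) (a : X), l a = 1 → ∀ y, S l y = l y • S l a := by
    intro l a ha y
    have h := h0 l (y - l y • a) (by simp [ha])
    rw [map_sub, map_smul, sub_eq_zero] at h
    simpa using h
  have trc : ∀ (l : Module.Dual ℝ X) (a : X), l a = 1 → l (S l a) = 0 := by
    intro l a ha
    have hS : S l = l.smulRight (S l a) := by
      ext y; simpa using rk1 l a ha y
    have := htr l
    rw [hS, traceSmulRight] at this
    exact this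
  ext l y
  simp only [LinearMap.zero_apply]
  rcases eq_or_ne l 0 with rfl | hl
  · simp
  · -- choose a with l a = 1
    have : ∃ a : X, l a ≠ 0 := by
      by_contra h
      push_neg at h
      exact hl (LinearMap.ext fun a => h a)
    obtain ⟨a0, ha0⟩ := this
    set a := (l a0)⁻¹ • a0 with haa
    have ha : l a = 1 := by simp [haa, inv_mul_cancel₀ ha0]
    rw [rk1 l a ha y]
    suffices hw : S l a = 0 by rw [hw, smul_zero]
    rw [← Module.forall_dual_apply_eq_zero_iff ℝ (S l a)]
    intro mu
    rcases eq_or_ne mu 0 with rfl | hmu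
    · simp
    · have : ∃ b : X, mu b ≠ 0 := by
        by_contra h; push_neg at h; exact hmu (LinearMap.ext fun b => h b)
      obtain ⟨b0, hb0⟩ := this
      set b := (mu b0)⁻¹ • b0 with hbb
      have hb : mu b = 1 := by simp [hbb, inv_mul_cancel₀ hb0]
      -- find x with l x ≠ 0 and mu x ≠ 0
      have hx : ∃ x : X, l x ≠ 0 ∧ mu x ≠ 0 := by
        by_cases h1 : mu a ≠ 0
        · exact ⟨a, by rw [ha]; exact one_ne_zero, h1⟩
        · by_cases h2 : l b ≠ 0
          · exact ⟨b, h2, by rw [hb]; exact one_ne_zero⟩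
          · push_neg at h1 h2
            exact ⟨a + b, by simp [ha, h2], by simp [hb, h1]⟩
      obtain ⟨x, hlx, hmux⟩ := hx
      -- w = S l a equals S mu b
      have e1 := hV' l mu x
      rw [rk1 l a ha x, rk1 mu b hb x] at e1
      rw [smul_smul, smul_smul, mul_comm] at e1
      have e2 : S l a = S mu b := by
        have hne : l x * mu x ≠ 0 := mul_ne_zero hlx hmux
        exact smul_right_injective X hne e1
      rw [e2]
      exact trc mu b hb

/-- **Lemma.**  Let `dim X = n ≥ 2`, `R : X* → End(X)` a linear map with trace-free values,
`f₁, …, fₙ` a basis of `X*`, and `V_{ij} = V^R_{f_i, f_j}`.  Then: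
(1) `T^R_p = {V^R_{λ,μ}(p) : λ, μ ∈ X*} = span{V_{ij}(p) : i < j}` for every `p ∈ X`;
(2) `R` is uniquely determined by the collection `{V_{ij}}_{i<j}`; in particular, if all
`V_{ij}` vanish then `R = 0`. -/
theorem VR_spans_TR_and_determines_R
    {X : Type*} [AddCommGroup X] [Module ℝ X] [FiniteDimensional ℝ X]
    (n : ℕ) (hn : 2 ≤ n) (hdim : Module.finrank ℝ X = n)
    (R : Module.Dual ℝ X →ₗ[ℝ] (X →ₗ[ℝ] X))
    (htr : ∀ lam : Module.Dual ℝ X, LinearMap.trace ℝ X (R lam) = 0)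
    (f : Basis (Fin n) ℝ (Module.Dual ℝ X)) :
    (∀ p : X,
      TR R p = {y | ∃ lam mu : Module.Dual ℝ X, VR R lam mu p = y} ∧
      TR R p = ↑(Submodule.span ℝ
        {y | ∃ i j : Fin n, i < j ∧ VR R (f i) (f j) p = y})) ∧
    (∀ R' : Module.Dual ℝ X →ₗ[ℝ] (X →ₗ[ℝ] X),
      (∀ lam : Module.Dual ℝ X, LinearMap.trace ℝ X (R' lam) = 0) →
      (∀ i j : Fin n, i < j → ∀ x : X, VR R' (f i) (f j) x = VR R (f i) (f j) x) →
      R' = R) ∧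
    ((∀ i j : Fin n, i < j → ∀ x : X, VR R (f i) (f j) x = 0) → R = 0) := by
  constructor
  · intro p
    exact ⟨part1a R p, part1b hn R f p⟩
  constructor
  · intro R' htr' hVeq
    have hS : R' - R = 0 := by
      apply core (R' - R) (fun lam => by
        simp only [LinearMap.sub_apply, map_sub]
        rw [htr' lam, htr lam, sub_zero]) f
      intro i j hij x
      have := hVeq i j hij x
      simp only [VR] at this
      simp only [VR, LinearMap.sub_apply, smul_sub]
      rw [sub_sub_sub_comm, this, sub_self]
    rwa [sub_eq_zero] at hS
  · intro hV0
    apply core R htr f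
    intro i j hij x
    exact hV0 i j hij x
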